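/- Anti-chain property for a concrete class: Let Π be any ground program whose rules are of the form h ← B, where h is an atom and B is a finite set of atoms together with at most one aggregate condition of the form |{t : p(t) ∈ S}| ⊙ n evaluated on the candidate set S (⊙ one of =, <, >, ≤, ≥, ≠). Define the aggregate reduct of Π w.r.t. S by deleting rules whose aggregate condition fails in S and replacing the aggregate condition in remaining rules by the set of atoms {p(t) : p(t) ∈ S}; S is an answer set iff S is the least model of the reduct. Then if A₁ and A₂ are both answer sets of Π and A₁ ⊆ A₂, then A₁ = A₂. -/
import Mathlib


/-- Models and least models of ground definite programs. -/
def IsModel {α : Type*} (P : Set (α × Set α)) (A : Set α) : Prop :=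
  ∀ r ∈ P, r.2 ⊆ A → r.1 ∈ A

def IsLeastModel {α : Type*} (P : Set (α × Set α)) (A : Set α) : Prop :=
  IsModel P A ∧ ∀ M : Set α, IsModel P M → A ⊆ M

/-- The six arithmetic relations. -/
inductive AggRel | eq | lt | gt | le | ge | ne

def AggRel.eval : AggRel → ℕ → ℕ → Prop
  | .eq, a, b => a = b
  | .lt, a, b => a < b
  | .gt, a, b => a > b
  | .le, a, b => a ≤ b
  | .ge, a, b => a ≥ b
  | .ne, a, b => a ≠ b

/-- A rule: head atom, finite set of body atoms, and at most one aggregate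
condition `|{t : p(t) ∈ S}| ⊙ n`. -/
structure ARule (τ α : Type*) where
  head : α
  body : Set α
  agg : Option (AggRel × ℕ)

/-- Aggregate reduct w.r.t. S: delete rules whose aggregate condition fails in S;
in surviving rules replace the condition by the atoms {p(t) : p(t) ∈ S}. -/
def reduct {τ α : Type*} (p : τ → α) (P : Set (ARule τ α)) (S : Set α) :
    Set (α × Set α) :=
  {r | ∃ q ∈ P,
    (q.agg = none ∧ r = (q.head, q.body)) ∨
    (∃ rel n, q.agg = some (rel, n) ∧ rel.eval (Set.ncard {t : τ | p t ∈ S}) n ∧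
      r = (q.head, q.body ∪ {a : α | ∃ t : τ, p t ∈ S ∧ a = p t}))}

def AnswerSet {τ α : Type*} (p : τ → α) (P : Set (ARule τ α)) (S : Set α) : Prop :=
  IsLeastModel (reduct p P S) S

/-- Anti-chain property. -/
theorem answer_sets_antichain {τ α : Type*} (p : τ → α) (P : Set (ARule τ α))
    (hfin : ∀ q ∈ P, q.body.Finite)
    (A₁ A₂ : Set α) (h₁ : AnswerSet p P A₁) (h₂ : AnswerSet p P A₂)
    (hsub : A₁ ⊆ A₂) : A₁ = A₂ := by
  refine Set.Subset.antisymm hsub (h₂.2 A₁ ?_)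
  intro r hr hbody
  obtain ⟨q, hq, hcase⟩ := hr
  rcases hcase with ⟨hnone, heq⟩ | ⟨rel, n, hsome, heval, heq⟩
  · exact h₁.1 r ⟨q, hq, Or.inl ⟨hnone, heq⟩⟩ hbody
  · subst heq
    simp only at hbody ⊢
    have hset : {t : τ | p t ∈ A₂} = {t : τ | p t ∈ A₁} := by
      ext t
      constructor
      · intro ht
        exact hbody (Or.inr ⟨t, ht, rfl⟩)
      · intro ht; exact hsub ht
    have hset2 : {a : α | ∃ t : τ, p t ∈ A₂ ∧ a = p t}
        = {a : α | ∃ t : τ, p t ∈ A₁ ∧ a = p t} := by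
      ext a
      constructor
      · rintro ⟨t, ht, rfl⟩
        exact ⟨t, (Set.ext_iff.mp hset t).mp ht, rfl⟩
      · rintro ⟨t, ht, rfl⟩
        exact ⟨t, hsub ht, rfl⟩
    refine h₁.1 (q.head, q.body ∪ {a : α | ∃ t : τ, p t ∈ A₁ ∧ a = p t})
      ⟨q, hq, Or.inr ⟨rel, n, hsome, ?_, rfl⟩⟩ ?_
    · rw [← hset]; exact heval
    · rw [← hset2]; exact hbody
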